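/- If R₀ > 1, then there exists a unique Q* ∈ (0,1) satisfying F(Q*) = 0; i.e., the fixed point problem Q = Q ∬_Ω k(x,s) e^{-Q Λ(x,s)} d(s,x) has exactly one non-trivial solution in (0,1). -/

import Mathlib

open MeasureTheory Real Set Filter
open scoped ENNReal

/-- `Λ(x,s) = ∫_s^x θ(t) dt`. -/
noncomputable def Lam (θ : ℝ → ℝ) (x s : ℝ) : ℝ := ∫ t in s..x, θ t

/-- `w(x;Q) = Q e^{-γx} ∫₀^x e^{γs} θ(s) e^{-Q Λ(x,s)} ds`. -/
noncomputable def w (γ : ℝ) (θ : ℝ → ℝ) (Q x : ℝ) : ℝ :=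
  Q * Real.exp (-γ * x) * ∫ s in (0:ℝ)..x, Real.exp (γ * s) * θ s * Real.exp (-Q * Lam θ x s)
/-- The kernel `k(x,s) = (p(x)/N)·θ(s)·e^{-γ(x-s)}`. -/
noncomputable def kker (γ N : ℝ) (p θ : ℝ → ℝ) (x s : ℝ) : ℝ :=
  (p x / N) * θ s * Real.exp (-γ * (x - s))

/-- The triangle `Ω = {(x,s) : 0 ≤ s ≤ x ≤ A}` (first coordinate `x`, second `s`). -/
def Tri (A : ℝ) : Set (ℝ × ℝ) := {q | 0 ≤ q.2 ∧ q.2 ≤ q.1 ∧ q.1 ≤ A}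

/-- Basic reproductive number `R₀ = ∬_Ω k(x,s) d(s,x)`. -/
noncomputable def R0 (γ N A : ℝ) (p θ : ℝ → ℝ) : ℝ :=
  ∫ q in Tri A, kker γ N p θ q.1 q.2

/-- `F(Q) = 1 - ∬_Ω k(x,s) e^{-Q Λ(x,s)} d(s,x)`. -/
noncomputable def FF (γ N A : ℝ) (p θ : ℝ → ℝ) (Q : ℝ) : ℝ :=
  1 - ∫ q in Tri A, kker γ N p θ q.1 q.2 * Real.exp (-Q * Lam θ q.1 q.2)

/-- Iteration map `T(Q) = Q·(1 - F(Q))`. -/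
noncomputable def TT (γ N A : ℝ) (p θ : ℝ → ℝ) (Q : ℝ) : ℝ :=
  Q * (1 - FF γ N A p θ Q)

noncomputable def GG (γ N A : ℝ) (p θ : ℝ → ℝ) (Q : ℝ) : ℝ :=
  ∫ q in Tri A, kker γ N p θ q.1 q.2 * Real.exp (-Q * Lam θ q.1 q.2)

lemma tri_isClosed (A : ℝ) : IsClosed (Tri A) := by
  have : Tri A = {q : ℝ×ℝ | 0 ≤ q.2} ∩ ({q : ℝ×ℝ | q.2 ≤ q.1} ∩ {q : ℝ×ℝ | q.1 ≤ A}) := by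
    ext q; simp [Tri, Set.mem_setOf_eq, Set.mem_inter_iff, and_assoc]
  rw [this]
  exact (isClosed_le continuous_const continuous_snd).inter
    ((isClosed_le continuous_snd continuous_fst).inter
      (isClosed_le continuous_fst continuous_const))

lemma tri_isCompact (A : ℝ) : IsCompact (Tri A) := by
  refine IsCompact.of_isClosed_subset (isCompact_Icc (a := ((0:ℝ),(0:ℝ))) (b := (A, A)))
    (tri_isClosed A) ?_
  rintro ⟨x, s⟩ ⟨h1, h2, h3⟩
  exact ⟨⟨le_trans h1 h2, h1⟩, ⟨h3, le_trans h2 h3⟩⟩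

lemma tri_measurableSet (A : ℝ) : MeasurableSet (Tri A) := (tri_isClosed A).measurableSet

lemma lam_eq (θ : ℝ → ℝ) (hθ : Continuous θ) (x s : ℝ) :
    Lam θ x s = (∫ t in (0:ℝ)..x, θ t) - ∫ t in (0:ℝ)..s, θ t := by
  rw [Lam, eq_comm]
  exact intervalIntegral.integral_interval_sub_left (hθ.intervalIntegrable _ _)
    (hθ.intervalIntegrable _ _)

lemma lam_cont (θ : ℝ → ℝ) (hθ : Continuous θ) :
    Continuous (fun q : ℝ × ℝ => Lam θ q.1 q.2) := by
  have hH : Continuous (fun u : ℝ => ∫ t in (0:ℝ)..u, θ t) :=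
    intervalIntegral.continuous_primitive (fun a b => hθ.intervalIntegrable a b) 0
  have : (fun q : ℝ × ℝ => Lam θ q.1 q.2)
      = fun q : ℝ × ℝ => (∫ t in (0:ℝ)..q.1, θ t) - ∫ t in (0:ℝ)..q.2, θ t := by
    funext q; exact lam_eq θ hθ q.1 q.2
  rw [this]
  exact (hH.comp continuous_fst).sub (hH.comp continuous_snd)

lemma integrand_cont (γ N A Q : ℝ) (p θ : ℝ → ℝ) (hθ : Continuous θ) (hp : Continuous p) :
    Continuous (fun q : ℝ × ℝ => kker γ N p θ q.1 q.2 * Real.exp (-Q * Lam θ q.1 q.2)) := by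
  have hL := lam_cont θ hθ
  unfold kker
  exact (((((hp.comp continuous_fst).div_const N).mul (hθ.comp continuous_snd)).mul
    ((continuous_const.mul (continuous_fst.sub continuous_snd)).rexp)).mul
    ((continuous_const.mul hL).rexp))

lemma integrandOn (γ N A Q : ℝ) (p θ : ℝ → ℝ) (hθ : Continuous θ) (hp : Continuous p) :
    IntegrableOn (fun q : ℝ × ℝ => kker γ N p θ q.1 q.2 * Real.exp (-Q * Lam θ q.1 q.2))
      (Tri A) volume :=
  ((integrand_cont γ N A Q p θ hθ hp).continuousOn).integrableOn_compact (tri_isCompact A)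

lemma lam_nonneg_on (θ : ℝ → ℝ) (hθpos : ∀ x, 0 < θ x) {x s : ℝ} (h : s ≤ x) :
    0 ≤ Lam θ x s :=
  intervalIntegral.integral_nonneg h (fun u _ => (hθpos u).le)

lemma lam_pos_on (θ : ℝ → ℝ) (hθ : Continuous θ) (hθpos : ∀ x, 0 < θ x) {x s : ℝ} (h : s < x) :
    0 < Lam θ x s :=
  intervalIntegral.intervalIntegral_pos_of_pos_on (hθ.intervalIntegrable _ _)
    (fun u _ => hθpos u) h

lemma kker_nonneg (γ N : ℝ) (hN : 0 < N) (p θ : ℝ → ℝ)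
    (hθpos : ∀ x, 0 < θ x) (hppos : ∀ x, 0 < p x) (x s : ℝ) :
    0 < kker γ N p θ x s :=
  mul_pos (mul_pos (div_pos (hppos x) hN) (hθpos s)) (Real.exp_pos _)

lemma GG_strictAntiOn (γ N A : ℝ) (hγ : 0 < γ) (hA : 0 < A) (hN : 0 < N) (p θ : ℝ → ℝ)
    (hθ : Continuous θ) (hθpos : ∀ x, 0 < θ x)
    (hp : Continuous p) (hppos : ∀ x, 0 < p x) :
    StrictAntiOn (GG γ N A p θ) (Set.Icc 0 1) := by
  intro Q1 hQ1 Q2 hQ2 hlt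
  set f1 := fun q : ℝ × ℝ => kker γ N p θ q.1 q.2 * Real.exp (-Q1 * Lam θ q.1 q.2) with hf1
  set f2 := fun q : ℝ × ℝ => kker γ N p θ q.1 q.2 * Real.exp (-Q2 * Lam θ q.1 q.2) with hf2
  have hi1 := integrandOn γ N A Q1 p θ hθ hp
  have hi2 := integrandOn γ N A Q2 p θ hθ hp
  have key : 0 < ∫ q in Tri A, (f1 q - f2 q) := by
    refine (setIntegral_pos_iff_support_of_nonneg_ae ?_ ?_).2 ?_
    · filter_upwards [ae_restrict_mem (tri_measurableSet A)]
      rintro ⟨x, s⟩ ⟨h1, h2, h3⟩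
      have hlam : 0 ≤ Lam θ x s := lam_nonneg_on θ hθpos h2
      have hexp : Real.exp (-Q2 * Lam θ x s) ≤ Real.exp (-Q1 * Lam θ x s) := by
        apply Real.exp_le_exp.2; nlinarith
      have hk := (kker_nonneg γ N hN p θ hθpos hppos x s).le
      simp only [Pi.zero_apply, hf1, hf2, sub_nonneg]
      exact mul_le_mul_of_nonneg_left hexp hk
    · exact hi1.sub hi2
    · set U : Set (ℝ × ℝ) := {q | 0 < q.2 ∧ q.2 < q.1 ∧ q.1 < A} with hU
      have hUopen : IsOpen U := by
        have : U = {q : ℝ×ℝ | 0 < q.2} ∩ ({q : ℝ×ℝ | q.2 < q.1} ∩ {q : ℝ×ℝ | q.1 < A}) := by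
          ext q; simp [hU, Set.mem_setOf_eq, and_assoc]
        rw [this]
        exact (isOpen_lt continuous_const continuous_snd).inter
          ((isOpen_lt continuous_snd continuous_fst).inter
            (isOpen_lt continuous_fst continuous_const))
      have hUne : U.Nonempty := by
        refine ⟨(2*A/3, A/3), ?_, ?_, ?_⟩ <;> simp only [hU] <;> linarith
      have hUsub : U ⊆ Function.support (fun q => f1 q - f2 q) ∩ Tri A := by
        rintro ⟨x, s⟩ ⟨h1, h2, h3⟩
        refine ⟨?_, h1.le, h2.le, h3.le⟩
        have hlam : 0 < Lam θ x s := lam_pos_on θ hθ hθpos h2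
        have hexp : Real.exp (-Q2 * Lam θ x s) < Real.exp (-Q1 * Lam θ x s) := by
          apply Real.exp_lt_exp.2
          nlinarith
        have hk := kker_nonneg γ N hN p θ hθpos hppos x s
        have hlt2 : f2 (x, s) < f1 (x, s) := mul_lt_mul_of_pos_left hexp hk
        simp only [Function.mem_support]
        intro hcon
        rw [sub_eq_zero] at hcon
        exact absurd hcon (ne_of_gt hlt2)
      calc (0:ℝ≥0∞) < volume U := hUopen.measure_pos volume hUne
        _ ≤ _ := measure_mono hUsub
  have hsub := integral_sub hi1 hi2
  have e1 : GG γ N A p θ Q1 = ∫ q in Tri A, f1 q := rfl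
  have e2 : GG γ N A p θ Q2 = ∫ q in Tri A, f2 q := rfl
  rw [hsub] at key
  rw [e1, e2]
  linarith

lemma GG_continuous (γ N A : ℝ) (p θ : ℝ → ℝ) (hθ : Continuous θ) (hp : Continuous p) :
    Continuous (GG γ N A p θ) := by
  rw [continuous_iff_continuousAt]
  intro Q₀
  obtain ⟨C, hC⟩ := (tri_isCompact A).exists_bound_of_continuousOn ((lam_cont θ hθ).continuousOn)
  set C' := max C 0 with hC'def
  have hC'0 : (0:ℝ) ≤ C' := le_max_right _ _
  have hbound : ∀ q ∈ Tri A, |Lam θ q.1 q.2| ≤ C' := fun q hq =>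
    le_trans (hC q hq) (le_max_left _ _)
  apply continuousAt_of_dominated
    (bound := fun q : ℝ × ℝ => |kker γ N p θ q.1 q.2| * Real.exp ((|Q₀| + 1) * C'))
  · exact Eventually.of_forall fun Q =>
      ((integrand_cont γ N A Q p θ hθ hp).aestronglyMeasurable)
  · filter_upwards [Metric.ball_mem_nhds Q₀ one_pos] with Q hQ
    rw [ae_restrict_iff' (tri_measurableSet A)]
    refine ae_of_all _ fun q hq => ?_
    have h1 : |Lam θ q.1 q.2| ≤ C' := hbound q hq
    have hQabs : |Q| ≤ |Q₀| + 1 := by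
      have := mem_ball_iff_norm.1 hQ
      rw [Real.norm_eq_abs] at this
      calc |Q| = |Q₀ + (Q - Q₀)| := by ring_nf
        _ ≤ |Q₀| + |Q - Q₀| := abs_add_le _ _
        _ ≤ |Q₀| + 1 := by linarith [abs_sub_comm Q Q₀ ▸ this.le]
    have hexp : Real.exp (-Q * Lam θ q.1 q.2) ≤ Real.exp ((|Q₀| + 1) * C') := by
      apply Real.exp_le_exp.2
      calc -Q * Lam θ q.1 q.2 ≤ |(-Q) * Lam θ q.1 q.2| := le_abs_self _
        _ = |Q| * |Lam θ q.1 q.2| := by rw [abs_mul, abs_neg]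
        _ ≤ (|Q₀| + 1) * C' := by
            apply mul_le_mul hQabs h1 (abs_nonneg _) (by positivity)
    rw [norm_mul, Real.norm_eq_abs, Real.norm_eq_abs, Real.abs_exp]
    exact mul_le_mul_of_nonneg_left hexp (abs_nonneg _)
  · refine Integrable.mul_const ?_ _
    have : ContinuousOn (fun q : ℝ×ℝ => |kker γ N p θ q.1 q.2|) (Tri A) := by
      apply Continuous.continuousOn
      have : Continuous (fun q : ℝ×ℝ => kker γ N p θ q.1 q.2) := by
        unfold kker
        exact (((hp.comp continuous_fst).div_const N).mul (hθ.comp continuous_snd)).mul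
          ((continuous_const.mul (continuous_fst.sub continuous_snd)).rexp)
      exact this.abs
    exact this.integrableOn_compact (tri_isCompact A)
  · refine ae_of_all _ fun q => ?_
    apply Continuous.continuousAt
    exact continuous_const.mul ((continuous_neg.mul continuous_const).rexp)

set_option maxHeartbeats 1000000 in
lemma GG_one_lt (γ N A : ℝ) (hγ : 0 < γ) (hA : 0 < A) (hN : 0 < N) (p θ : ℝ → ℝ)
    (hθ : Continuous θ) (hθpos : ∀ x, 0 < θ x)
    (hp : Continuous p) (hppos : ∀ x, 0 < p x)
    (hnorm : ∫ x in (0:ℝ)..A, p x = N) :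
    GG γ N A p θ 1 < 1 := by
  set f : ℝ × ℝ → ℝ := fun q => kker γ N p θ q.1 q.2 * Real.exp (-1 * Lam θ q.1 q.2) with hf
  set g : ℝ → ℝ := fun x => ∫ s in Icc (0:ℝ) x, f (x, s) with hg
  have hfc : Continuous f := integrand_cont γ N A 1 p θ hθ hp
  have hfi : IntegrableOn f (Tri A) := integrandOn γ N A 1 p θ hθ hp
  have hind : Integrable ((Tri A).indicator f) volume :=
    (integrable_indicator_iff (tri_measurableSet A)).2 hfi
  have hprod : Integrable ((Tri A).indicator f) ((volume : Measure ℝ).prod volume) := by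
    rwa [← Measure.volume_eq_prod]
  have hpt : ∀ x : ℝ, (∫ s, (Tri A).indicator f (x, s)) = (Icc (0:ℝ) A).indicator g x := by
    intro x
    by_cases hx : x ∈ Icc (0:ℝ) A
    · rw [Set.indicator_of_mem hx, hg]
      have hs : ∀ s, (Tri A).indicator f (x, s) = (Icc (0:ℝ) x).indicator (fun s => f (x, s)) s := by
        intro s
        by_cases hsm : s ∈ Icc (0:ℝ) x
        · rw [Set.indicator_of_mem hsm, Set.indicator_of_mem]
          exact ⟨hsm.1, hsm.2, hx.2⟩
        · rw [Set.indicator_of_notMem hsm, Set.indicator_of_notMem]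
          intro hmem; exact hsm ⟨hmem.1, hmem.2.1⟩
      simp_rw [hs]
      exact integral_indicator measurableSet_Icc
    · rw [Set.indicator_of_notMem hx]
      have hz : ∀ s, (Tri A).indicator f (x, s) = 0 := by
        intro s; apply Set.indicator_of_notMem
        intro hmem
        exact hx ⟨le_trans hmem.1 hmem.2.1, hmem.2.2⟩
      simp_rw [hz, integral_zero]
  have heq : GG γ N A p θ 1 = ∫ x in Icc (0:ℝ) A, g x := by
    have h0 : GG γ N A p θ 1 = ∫ q in Tri A, f q := rfl
    rw [h0, ← integral_indicator (tri_measurableSet A)]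
    have h1 : ∫ q, (Tri A).indicator f q = ∫ q, (Tri A).indicator f q ∂((volume : Measure ℝ).prod volume) := by
      rw [← Measure.volume_eq_prod]
    rw [h1, MeasureTheory.integral_prod _ hprod]
    simp_rw [hpt]
    exact integral_indicator measurableSet_Icc
  have hgint : IntegrableOn g (Icc (0:ℝ) A) volume := by
    have h1 : Integrable (fun x => ∫ s, (Tri A).indicator f (x, s)) volume :=
      hprod.integral_prod_left
    have h2 : Integrable ((Icc (0:ℝ) A).indicator g) volume := by
      have : (fun x => ∫ s, (Tri A).indicator f (x, s)) = (Icc (0:ℝ) A).indicator g :=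
        funext hpt
      rwa [this] at h1
    exact (integrable_indicator_iff measurableSet_Icc).1 h2
  set c := Real.exp (-(Lam θ A 0)) with hc
  have hΛA : 0 < Lam θ A 0 := lam_pos_on θ hθ hθpos hA
  have hc0 : 0 < c := Real.exp_pos _
  have hc1 : c < 1 := by
    rw [hc]
    calc Real.exp (-(Lam θ A 0)) < Real.exp 0 := Real.exp_lt_exp.2 (by linarith)
      _ = 1 := Real.exp_zero
  have hH : Continuous (fun u : ℝ => ∫ t in (0:ℝ)..u, θ t) :=
    intervalIntegral.continuous_primitive (fun a b => hθ.intervalIntegrable a b) 0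
  have hcontLam : ∀ x : ℝ, Continuous (fun s => Lam θ x s) := by
    intro x
    have he : (fun s => Lam θ x s)
        = fun s => (∫ t in (0:ℝ)..x, θ t) - ∫ t in (0:ℝ)..s, θ t := funext (lam_eq θ hθ x)
    rw [he]
    exact continuous_const.sub hH
  have hb : ∀ x ∈ Icc (0:ℝ) A, g x ≤ (p x / N) * (1 - c) := by
    intro x hx
    have hΛder : ∀ s : ℝ, HasDerivAt (fun u => Real.exp (-1 * Lam θ x u))
        (θ s * Real.exp (-1 * Lam θ x s)) s := by
      intro s
      have hH : HasDerivAt (fun u => ∫ t in (0:ℝ)..u, θ t) (θ s) s :=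
        intervalIntegral.integral_hasDerivAt_right (hθ.intervalIntegrable _ _)
          (hθ.stronglyMeasurableAtFilter _ _) hθ.continuousAt
      have h2 : HasDerivAt (fun u => -1 * Lam θ x u) (θ s) s := by
        have he : (fun u => -1 * Lam θ x u)
            = fun u => (∫ t in (0:ℝ)..u, θ t) - ∫ t in (0:ℝ)..x, θ t := by
          funext u; rw [lam_eq θ hθ]; ring
        rw [he]
        simpa using hH.sub_const (∫ t in (0:ℝ)..x, θ t)
      have := h2.exp
      simpa [mul_comm] using this
    have hFTC : ∫ s in (0:ℝ)..x, θ s * Real.exp (-1 * Lam θ x s)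
        = 1 - Real.exp (-1 * Lam θ x 0) := by
      rw [intervalIntegral.integral_eq_sub_of_hasDerivAt (fun s _ => hΛder s)
        ((hθ.mul ((continuous_const.mul (hcontLam x)).rexp)).intervalIntegrable _ _)]
      have : Lam θ x x = 0 := intervalIntegral.integral_same
      rw [this]
      norm_num
    have hint1 : IntegrableOn (fun s => f (x, s)) (Icc (0:ℝ) x) volume :=
      (hfc.comp (continuous_const.prodMk continuous_id)).integrableOn_Icc
    have hint2 : IntegrableOn (fun s => (p x / N) * (θ s * Real.exp (-1 * Lam θ x s)))
        (Icc (0:ℝ) x) volume :=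
      (continuous_const.mul (hθ.mul ((continuous_const.mul (hcontLam x)).rexp))).integrableOn_Icc
    have step1 : g x ≤ ∫ s in Icc (0:ℝ) x, (p x / N) * (θ s * Real.exp (-1 * Lam θ x s)) := by
      rw [hg]
      apply setIntegral_mono_on hint1 hint2 measurableSet_Icc
      intro s hs
      simp only [hf, kker]
      have he : Real.exp (-γ * (x - s)) ≤ 1 := by
        calc Real.exp (-γ * (x - s)) ≤ Real.exp 0 :=
              Real.exp_le_exp.2 (by nlinarith [hs.2])
          _ = 1 := Real.exp_zero
      have hnn : 0 ≤ p x / N * θ s :=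
        mul_nonneg (div_nonneg (hppos x).le hN.le) (hθpos s).le
      calc p x / N * θ s * Real.exp (-γ * (x - s)) * Real.exp (-1 * Lam θ x s)
          ≤ p x / N * θ s * 1 * Real.exp (-1 * Lam θ x s) := by
            apply mul_le_mul_of_nonneg_right _ (Real.exp_pos _).le
            nlinarith [Real.exp_pos (-γ * (x - s))]
        _ = p x / N * (θ s * Real.exp (-1 * Lam θ x s)) := by ring
    have step2 : ∫ s in Icc (0:ℝ) x, (p x / N) * (θ s * Real.exp (-1 * Lam θ x s))
        = (p x / N) * (1 - Real.exp (-1 * Lam θ x 0)) := by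
      rw [MeasureTheory.integral_const_mul, integral_Icc_eq_integral_Ioc,
        ← intervalIntegral.integral_of_le hx.1, hFTC]
    have step3 : c ≤ Real.exp (-1 * Lam θ x 0) := by
      rw [hc]
      apply Real.exp_le_exp.2
      have hdiff : Lam θ A 0 - Lam θ x 0 = ∫ t in x..A, θ t := by
        rw [Lam, Lam]
        exact intervalIntegral.integral_interval_sub_left (hθ.intervalIntegrable _ _)
          (hθ.intervalIntegrable _ _)
      have hnn : 0 ≤ ∫ t in x..A, θ t :=
        intervalIntegral.integral_nonneg hx.2 (fun u _ => (hθpos u).le)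
      linarith
    calc g x ≤ (p x / N) * (1 - Real.exp (-1 * Lam θ x 0)) := by rw [← step2]; exact step1
      _ ≤ (p x / N) * (1 - c) := by
          apply mul_le_mul_of_nonneg_left (by linarith) (div_nonneg (hppos x).le hN.le)
  have hfinal : ∫ x in Icc (0:ℝ) A, g x ≤ ∫ x in Icc (0:ℝ) A, (p x / N) * (1 - c) :=
    setIntegral_mono_on hgint
      (((hp.div_const N).mul continuous_const).integrableOn_Icc)
      measurableSet_Icc hb
  have hval : ∫ x in Icc (0:ℝ) A, (p x / N) * (1 - c) = 1 - c := by
    have h1 : ∀ x, (p x / N) * (1 - c) = p x * ((1 - c) / N) := by intro x; ring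
    simp_rw [h1]
    rw [integral_mul_const, integral_Icc_eq_integral_Ioc,
      ← intervalIntegral.integral_of_le hA.le, hnorm]
    field_simp
  rw [heq]
  calc ∫ x in Icc (0:ℝ) A, g x ≤ 1 - c := by rw [← hval]; exact hfinal
    _ < 1 := by linarith

set_option maxHeartbeats 1000000 in
/-- if `R₀ > 1` there is a unique `Q* ∈ (0,1)` with `F(Q*) = 0`,
i.e. a unique non-trivial solution of the fixed point problem in `(0,1)`. -/
theorem endemic_equilibrium_exists (γ A N : ℝ) (hγ : 0 < γ) (hA : 0 < A) (hN : 0 < N)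
    (θ p : ℝ → ℝ)
    (hθc : ContinuousOn θ (Set.Icc 0 A)) (hθpos : ∀ x ∈ Set.Icc 0 A, 0 < θ x)
    (hpc : ContinuousOn p (Set.Icc 0 A)) (hppos : ∀ x ∈ Set.Icc 0 A, 0 < p x)
    (hnorm : (1/N) * ∫ x in (0:ℝ)..A, p x = 1)
    (hR0 : 1 < R0 γ N A p θ) :
    (∃! Q : ℝ, Q ∈ Set.Ioo (0:ℝ) 1 ∧ FF γ N A p θ Q = 0) ∧
    (∃! Q : ℝ, Q ∈ Set.Ioo (0:ℝ) 1 ∧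
      Q = Q * ∫ q in Tri A, kker γ N p θ q.1 q.2 * Real.exp (-Q * Lam θ q.1 q.2)) := by
  -- continuous positive extensions of θ and p to all of ℝ
  set θ' : ℝ → ℝ := fun t => θ ((Set.projIcc (0:ℝ) A hA.le t : Set.Icc (0:ℝ) A) : ℝ) with hθ'def
  set p' : ℝ → ℝ := fun t => p ((Set.projIcc (0:ℝ) A hA.le t : Set.Icc (0:ℝ) A) : ℝ) with hp'def
  have hproj : Continuous fun t : ℝ => ((Set.projIcc (0:ℝ) A hA.le t : Set.Icc (0:ℝ) A) : ℝ) :=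
    continuous_subtype_val.comp continuous_projIcc
  have hmemproj : ∀ t : ℝ, ((Set.projIcc (0:ℝ) A hA.le t : Set.Icc (0:ℝ) A) : ℝ) ∈ Set.Icc (0:ℝ) A :=
    fun t => (Set.projIcc (0:ℝ) A hA.le t).2
  have hθ' : Continuous θ' := hθc.comp_continuous hproj hmemproj
  have hp' : Continuous p' := hpc.comp_continuous hproj hmemproj
  have hθ'pos : ∀ t, 0 < θ' t := fun t => hθpos _ (hmemproj t)
  have hp'pos : ∀ t, 0 < p' t := fun t => hppos _ (hmemproj t)
  have hθ'eq : ∀ t ∈ Set.Icc (0:ℝ) A, θ' t = θ t := by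
    intro t ht
    rw [hθ'def]
    simp only [Set.projIcc_of_mem hA.le ht]
  have hp'eq : ∀ t ∈ Set.Icc (0:ℝ) A, p' t = p t := by
    intro t ht
    rw [hp'def]
    simp only [Set.projIcc_of_mem hA.le ht]
  have hLamEq : ∀ x s : ℝ, 0 ≤ s → s ≤ x → x ≤ A → Lam θ x s = Lam θ' x s := by
    intro x s h0 hsx hxA
    apply intervalIntegral.integral_congr
    intro t ht
    rw [Set.uIcc_of_le hsx] at ht
    exact (hθ'eq t ⟨le_trans h0 ht.1, le_trans ht.2 hxA⟩).symm
  have hcong : ∀ Q : ℝ, (∫ q in Tri A, kker γ N p θ q.1 q.2 * Real.exp (-Q * Lam θ q.1 q.2))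
      = GG γ N A p' θ' Q := by
    intro Q
    rw [GG]
    apply setIntegral_congr_fun (tri_measurableSet A)
    rintro ⟨x, s⟩ ⟨h1, h2, h3⟩
    have hxm : x ∈ Set.Icc (0:ℝ) A := ⟨le_trans h1 h2, h3⟩
    have hsm : s ∈ Set.Icc (0:ℝ) A := ⟨h1, le_trans h2 h3⟩
    simp only [kker]
    rw [hp'eq x hxm, hθ'eq s hsm, hLamEq x s h1 h2 h3]
  have hFF : ∀ Q : ℝ, FF γ N A p θ Q = 1 - GG γ N A p' θ' Q := by
    intro Q; rw [FF, hcong Q]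
  have hG0 : 1 < GG γ N A p' θ' 0 := by
    have e : R0 γ N A p θ = ∫ q in Tri A, kker γ N p θ q.1 q.2
        * Real.exp (-(0:ℝ) * Lam θ q.1 q.2) := by
      rw [R0]; simp
    rw [e, hcong 0] at hR0
    exact hR0
  have hnorm' : ∫ x in (0:ℝ)..A, p' x = N := by
    have h1 : ∫ x in (0:ℝ)..A, p' x = ∫ x in (0:ℝ)..A, p x := by
      apply intervalIntegral.integral_congr
      intro t ht
      rw [Set.uIcc_of_le hA.le] at ht
      exact hp'eq t ht
    rw [h1]
    field_simp at hnorm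
    linarith
  have hG1 : GG γ N A p' θ' 1 < 1 :=
    GG_one_lt γ N A hγ hA hN p' θ' hθ' hθ'pos hp' hp'pos hnorm'
  have hGGcont := GG_continuous γ N A p' θ' hθ' hp'
  have hGGanti := GG_strictAntiOn γ N A hγ hA hN p' θ' hθ' hθ'pos hp' hp'pos
  -- existence via IVT
  have hsub := intermediate_value_Ioo' (zero_le_one) hGGcont.continuousOn
  obtain ⟨Q, hQmem, hQeq⟩ := hsub (⟨hG1, hG0⟩ : (1:ℝ) ∈ Set.Ioo (GG γ N A p' θ' 1) (GG γ N A p' θ' 0))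
  have huniq : ∀ Q2 : ℝ, Q2 ∈ Set.Ioo (0:ℝ) 1 → FF γ N A p θ Q2 = 0 → Q2 = Q := by
    intro Q2 hQ2mem hQ2F
    have hG2 : GG γ N A p' θ' Q2 = 1 := by
      have := hFF Q2
      rw [hQ2F] at this
      linarith
    exact hGGanti.injOn (Set.mem_Icc_of_Ioo hQ2mem) (Set.mem_Icc_of_Ioo hQmem)
      (hG2.trans hQeq.symm)
  have hQFF : FF γ N A p θ Q = 0 := by
    rw [hFF, hQeq]; ring
  have part1 : ∃! Q' : ℝ, Q' ∈ Set.Ioo (0:ℝ) 1 ∧ FF γ N A p θ Q' = 0 :=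
    ⟨Q, ⟨hQmem, hQFF⟩, fun Q2 h => huniq Q2 h.1 h.2⟩
  refine ⟨part1, ?_⟩
  have hiff : ∀ x : ℝ, x ∈ Set.Ioo (0:ℝ) 1 →
      ((x = x * ∫ q in Tri A, kker γ N p θ q.1 q.2 * Real.exp (-x * Lam θ q.1 q.2))
        ↔ FF γ N A p θ x = 0) := by
    intro x hx
    rw [FF]
    constructor
    · intro h
      have hx0 : x ≠ 0 := ne_of_gt hx.1
      have h2 : x * (1 - ∫ q in Tri A, kker γ N p θ q.1 q.2 * Real.exp (-x * Lam θ q.1 q.2)) = 0 := by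
        rw [mul_sub, mul_one, ← h]; ring
      rcases mul_eq_zero.1 h2 with h3 | h3
      · exact absurd h3 hx0
      · exact h3
    · intro h
      have : (∫ q in Tri A, kker γ N p θ q.1 q.2 * Real.exp (-x * Lam θ q.1 q.2)) = 1 := by
        linarith
      rw [this, mul_one]
  exact ⟨Q, ⟨hQmem, (hiff Q hQmem).2 hQFF⟩,
    fun Q2 h => huniq Q2 h.1 ((hiff Q2 h.1).1 h.2)⟩
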